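/- Assume (B1)–(B3) and fix λ > 0, σ ∈ (0,1), c > 0, z⁻ ∈ H, p⁻ ∈ ℝ^ℓ. Set L^ψ := λ(L_f + L_g‖p⁻‖ + c(B_g^{(0)}L_g + (B_g^{(1)})²)) + 1 and σ' := σ/√(L^ψ). Suppose (z, v, ε) ∈ H × ℝ^n × ℝ_+ satisfies v ∈ ∂_ε(λ L_c(·;p⁻) + (1/2)‖·−z⁻‖²)(z) and ‖v‖² + 2ε ≤ (σ')²‖v + z⁻ − z‖². Define r := v + z⁻ − z, δ := ε/λ, p := Π_{K*}(p⁻ + c g(z)), ẑ := argmin_u {λ(⟨∇f(z) + ∇g(z)p, u−z⟩ + h(u)) − ⟨r, u−z⟩ + (L^ψ/2)‖u−z‖²}, and w := (r + L^ψ(z − ẑ))/λ. Then w ∈ ∇f(z) + ∂_δ h(z) + ∇g(z)p, ‖w‖ ≤ (1/λ)(1 + σ'√(L^ψ))‖r‖, and δ ≤ (σ')²‖r‖²/(2λ). -/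

import Mathlib

open RealInnerProductSpace Pointwise

/-- The dual cone of a set in a real inner product space. -/
def dualCone {F : Type*} [NormedAddCommGroup F] [InnerProductSpace ℝ F] (K : Set F) : Set F :=
  {y | ∀ x ∈ K, 0 ≤ ⟪y, x⟫}

/-- `p` is the Euclidean projection of `x` onto `S`. -/
def IsProjOn {F : Type*} [NormedAddCommGroup F] [InnerProductSpace ℝ F]
    (S : Set F) (x p : F) : Prop :=
  p ∈ S ∧ ∀ y ∈ S, dist x p ≤ dist x y

/-- `g` is `K`-convex. -/
def KConvex {E F : Type*} [NormedAddCommGroup E] [InnerProductSpace ℝ E]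
    [NormedAddCommGroup F] [InnerProductSpace ℝ F] (K : Set F) (g : E → F) : Prop :=
  ∀ z z' : E, ∀ t : ℝ, t ∈ Set.Icc (0 : ℝ) 1 →
    g (t • z' + (1 - t) • z) - t • g z' - (1 - t) • g z ∈ -K

/-- The ε-subdifferential at `z` of a proper extended-real-valued function represented by
its effective domain `D` and its real values `ψ` on `D` (the function equals `+∞` off `D`). -/
def epsSubdiff {E : Type*} [NormedAddCommGroup E] [InnerProductSpace ℝ E]
    (D : Set E) (ψ : E → ℝ) (ε : ℝ) (z : E) : Set E :=
  {u | ∀ z' ∈ D, ψ z + ⟪u, z' - z⟫ - ε ≤ ψ z'}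

/-- The augmented Lagrangian `L_c(z;p)`; the proper closed convex function `h` is represented
by its real values on its effective domain `H`. -/
noncomputable def AugLag {E F : Type*} [NormedAddCommGroup E] [InnerProductSpace ℝ E]
    [NormedAddCommGroup F] [InnerProductSpace ℝ F]
    (K : Set F) (f h : E → ℝ) (g : E → F) (c : ℝ) (z : E) (p : F) : ℝ :=
  f z + h z + (1 / (2 * c)) * ((Metric.infDist (p + c • g z) (-K)) ^ 2 - ‖p‖ ^ 2)

section Helpers

variable {F : Type*} [NormedAddCommGroup F] [InnerProductSpace ℝ F]

lemma helper_le (A B : ℝ) (h : ∀ t : ℝ, 0 < t → t ≤ 1 → A ≤ t * B) : A ≤ 0 := by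
  have ht : Filter.Tendsto (fun n : ℕ => (1 / (n + 1) : ℝ) * B) Filter.atTop (nhds 0) := by
    simpa using tendsto_one_div_add_atTop_nhds_zero_nat.mul_const B
  refine ge_of_tendsto' ht fun n => h _ (by positivity) ?_
  rw [div_le_one (by positivity)]
  linarith [Nat.cast_nonneg (α := ℝ) n]

lemma isProjOn_obtuse {S : Set F} (hS : Convex ℝ S) {x p : F} (hp : IsProjOn S x p)
    {s : F} (hs : s ∈ S) : ⟪x - p, s - p⟫ ≤ 0 := by
  have key : ∀ t : ℝ, 0 < t → t ≤ 1 → 2 * ⟪x - p, s - p⟫ ≤ t * ‖s - p‖ ^ 2 := by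
    intro t ht0 ht1
    have hmem : p + t • (s - p) ∈ S := by
      have := hS hp.1 hs (by linarith : (0:ℝ) ≤ 1 - t) (le_of_lt ht0) (by ring)
      convert this using 1
      module
    have hd := hp.2 _ hmem
    rw [dist_eq_norm, dist_eq_norm] at hd
    have hsq : ‖x - p‖ ^ 2 ≤ ‖x - (p + t • (s - p))‖ ^ 2 :=
      pow_le_pow_left₀ (norm_nonneg _) hd 2
    have hexp : ‖x - (p + t • (s - p))‖ ^ 2
        = ‖x - p‖ ^ 2 - 2 * (t * ⟪x - p, s - p⟫) + t ^ 2 * ‖s - p‖ ^ 2 := by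
      rw [show x - (p + t • (s - p)) = (x - p) - t • (s - p) from by abel,
        norm_sub_sq_real, real_inner_smul_right, norm_smul, Real.norm_eq_abs, abs_of_pos ht0]
      ring
    rw [hexp] at hsq
    have h2 : t * (2 * ⟪x - p, s - p⟫) ≤ t * (t * ‖s - p‖ ^ 2) := by nlinarith
    exact le_of_mul_le_mul_left h2 ht0
  nlinarith [helper_le _ _ key]

lemma obtuse_unique {S : Set F} {x p₁ p₂ : F} (o1 : ∀ s ∈ S, ⟪x - p₁, s - p₁⟫ ≤ 0)
    (o2 : ∀ s ∈ S, ⟪x - p₂, s - p₂⟫ ≤ 0) (h1 : p₁ ∈ S) (h2 : p₂ ∈ S) : p₁ = p₂ := by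
  have a := o1 p₂ h2
  have b := o2 p₁ h1
  have e : ⟪x - p₁, p₂ - p₁⟫ - ⟪x - p₂, p₂ - p₁⟫ = ‖p₂ - p₁‖ ^ 2 := by
    rw [← inner_sub_left, show (x - p₁) - (x - p₂) = p₂ - p₁ from by abel,
      real_inner_self_eq_norm_sq]
  have c : ⟪x - p₂, p₂ - p₁⟫ = -⟪x - p₂, p₁ - p₂⟫ := by
    rw [show p₂ - p₁ = -(p₁ - p₂) from by abel, inner_neg_right]
  have hn : ‖p₂ - p₁‖ = 0 := by nlinarith [norm_nonneg (p₂ - p₁)]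
  have := norm_eq_zero.mp hn
  symm
  exact sub_eq_zero.mp this

lemma obtuse_nonexpansive {S : Set F} {a b pa pb : F} (ha : pa ∈ S) (hb : pb ∈ S)
    (oa : ∀ s ∈ S, ⟪a - pa, s - pa⟫ ≤ 0) (ob : ∀ s ∈ S, ⟪b - pb, s - pb⟫ ≤ 0) :
    ‖pa - pb‖ ≤ ‖a - b‖ := by
  have h1 := oa pb hb
  have h2 := ob pa ha
  have e : ⟪a - b, pa - pb⟫ = (⟪a - pa, pa - pb⟫ - ⟪b - pb, pa - pb⟫) + ‖pa - pb‖ ^ 2 := by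
    rw [show a - b = ((a - pa) - (b - pb)) + (pa - pb) from by abel, inner_add_left,
      inner_sub_left, real_inner_self_eq_norm_sq]
  have h1' : ⟪a - pa, pa - pb⟫ = -⟪a - pa, pb - pa⟫ := by
    rw [show pa - pb = -(pb - pa) from by abel, inner_neg_right]
  have hcs := real_inner_le_norm (a - b) (pa - pb)
  nlinarith [norm_nonneg (pa - pb), norm_nonneg (a - b)]

lemma infDistSq_hasFDerivAt [CompleteSpace F] {S : Set F} {P : F → F}
    (hPmem : ∀ y, P y ∈ S)
    (hPdist : ∀ y, Metric.infDist y S = dist y (P y))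
    (hPobt : ∀ y, ∀ s ∈ S, ⟪y - P y, s - P y⟫ ≤ 0) (y : F) :
    HasFDerivAt (fun x => Metric.infDist x S ^ 2)
      (InnerProductSpace.toDual ℝ F ((2:ℝ) • (y - P y))) y := by
  have hq : ∀ x, Metric.infDist x S ^ 2 = ‖x - P x‖ ^ 2 := fun x => by
    rw [hPdist x, dist_eq_norm]
  have sandwich : ∀ u : F,
      0 ≤ Metric.infDist u S ^ 2 - Metric.infDist y S ^ 2 - ⟪(2:ℝ) • (y - P y), u - y⟫ ∧
      Metric.infDist u S ^ 2 - Metric.infDist y S ^ 2 - ⟪(2:ℝ) • (y - P y), u - y⟫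
        ≤ ‖u - y‖ ^ 2 := by
    intro u
    have hiu : ⟪(2:ℝ) • (y - P y), u - y⟫ = 2 * ⟪y - P y, u - y⟫ :=
      real_inner_smul_left _ _ _
    constructor
    · rw [hq u, hq y, hiu]
      have h0 : 0 ≤ ‖(u - P u) - (y - P y)‖ ^ 2 := sq_nonneg _
      rw [norm_sub_sq_real] at h0
      have hobt : ⟪y - P y, P u - P y⟫ ≤ 0 := hPobt y _ (hPmem u)
      have hdec : ⟪u - P u, y - P y⟫
          = ⟪u - y, y - P y⟫ + ‖y - P y‖ ^ 2 + ⟪P y - P u, y - P y⟫ := by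
        rw [← real_inner_self_eq_norm_sq, ← inner_add_left, ← inner_add_left]
        congr 1
        abel
      have hcomm : ⟪u - y, y - P y⟫ = ⟪y - P y, u - y⟫ := real_inner_comm _ _
      have hcomm2 : ⟪P y - P u, y - P y⟫ = -⟪y - P y, P u - P y⟫ := by
        rw [real_inner_comm, show P y - P u = -(P u - P y) from by abel, inner_neg_right]
      linarith
    · rw [hq y, hiu]
      have h1 : Metric.infDist u S ≤ ‖u - P y‖ := by
        rw [← dist_eq_norm]
        exact Metric.infDist_le_dist_of_mem (hPmem y)
      have h2 : Metric.infDist u S ^ 2 ≤ ‖u - P y‖ ^ 2 :=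
        pow_le_pow_left₀ Metric.infDist_nonneg h1 2
      have h3 : ‖u - P y‖ ^ 2 = ‖u - y‖ ^ 2 + 2 * ⟪u - y, y - P y⟫ + ‖y - P y‖ ^ 2 := by
        rw [show u - P y = (u - y) + (y - P y) from by abel, norm_add_sq_real]
      linarith [real_inner_comm (u - y) (y - P y)]
  rw [hasFDerivAt_iff_isLittleO_nhds_zero, Asymptotics.isLittleO_iff]
  intro C hC
  filter_upwards [Metric.ball_mem_nhds (0:F) hC] with v hv
  rw [Metric.mem_ball, dist_zero_right] at hv
  obtain ⟨h1, h2⟩ := sandwich (y + v)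
  rw [show y + v - y = v from by abel] at h1 h2
  rw [InnerProductSpace.toDual_apply_apply, Real.norm_eq_abs]
  rw [abs_le]
  constructor
  · nlinarith [norm_nonneg v, mul_nonneg hC.le (norm_nonneg v)]
  · nlinarith [norm_nonneg v]
end Helpers


set_option maxHeartbeats 4000000 in
/-- basic properties of the refined iterate of one NL-IAPIAL prox step
(Proposition 2.2(a) of the paper). -/
theorem refinement_weak
    {E F : Type*}
    [NormedAddCommGroup E] [InnerProductSpace ℝ E] [FiniteDimensional ℝ E]
    [NormedAddCommGroup F] [InnerProductSpace ℝ F] [FiniteDimensional ℝ F]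
    -- K is a nonempty closed convex cone
    (K : Set F) (hKne : K.Nonempty) (hKcl : IsClosed K) (hKcvx : Convex ℝ K)
    (hKcone : ∀ t : ℝ, 0 < t → ∀ x ∈ K, t • x ∈ K)
    -- (B1): h proper closed convex, K_h-Lipschitz on its compact domain H of diameter ≤ Dh
    (H : Set E) (h : E → ℝ) (Kh Dh : ℝ) (hKh : 0 < Kh) (hDh0 : 0 < Dh)
    (hHne : H.Nonempty) (hHcpt : IsCompact H) (hHcvx : Convex ℝ H)
    (hhcvx : ConvexOn ℝ H h)
    (hhlip : ∀ x ∈ H, ∀ y ∈ H, |h x - h y| ≤ Kh * ‖x - y‖)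
    (hDh : ∀ x ∈ H, ∀ y ∈ H, ‖x - y‖ ≤ Dh)
    -- (B2): f differentiable on H with lower curvature m_f and L_f-Lipschitz gradient
    (f : E → ℝ) (f' : E → E) (mf Lf : ℝ) (hmf : 0 < mf) (hLf : 0 < Lf)
    (hfdiff : ∀ z ∈ H, HasGradientAt f (f' z) z)
    (hflow : ∀ z ∈ H, ∀ z' ∈ H, -(mf / 2) * ‖z' - z‖ ^ 2 ≤ f z' - f z - ⟪f' z, z' - z⟫)
    (hflip : ∀ z ∈ H, ∀ z' ∈ H, ‖f' z' - f' z‖ ≤ Lf * ‖z' - z‖)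
    -- (B3): g K-convex and differentiable with L_g-Lipschitz derivative
    (g : E → F) (g' : E → (E →L[ℝ] F)) (Lg : ℝ) (hLg : 0 < Lg)
    (hgdiff : ∀ z, HasFDerivAt g (g' z) z) (hgK : KConvex K g)
    (hglip : ∀ z z' : E, ‖g' z' - g' z‖ ≤ Lg * ‖z' - z‖)
    -- bounds B_g⁽⁰⁾ and B_g⁽¹⁾
    (Bg0 Bg1 : ℝ) (hBg0 : ∀ z ∈ H, ‖g z‖ ≤ Bg0) (hBg1 : ∀ z ∈ H, ‖g' z‖ ≤ Bg1)
    -- data of the prox subproblem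
    (lam σ c : ℝ) (hlam : 0 < lam) (hσ0 : 0 < σ) (hσ1 : σ < 1) (hc : 0 < c)
    (zm : E) (hzm : zm ∈ H) (pm : F)
    (Lψ : ℝ) (hLψ : Lψ = lam * (Lf + Lg * ‖pm‖ + c * (Bg0 * Lg + Bg1 ^ 2)) + 1)
    (σ' : ℝ) (hσ' : σ' = σ / Real.sqrt Lψ)
    -- the inexact solution (z, v, ε) of the prox subproblem
    (z : E) (hz : z ∈ H) (v : E) (ε : ℝ) (hε : 0 ≤ ε)
    (hv : v ∈ epsSubdiff H
      (fun u => lam * AugLag K f h g c u pm + (1 / 2) * ‖u - zm‖ ^ 2) ε z)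
    (hvineq : ‖v‖ ^ 2 + 2 * ε ≤ σ' ^ 2 * ‖v + zm - z‖ ^ 2)
    -- refined quantities
    (r : E) (hr : r = v + zm - z)
    (δ : ℝ) (hδ : δ = ε / lam)
    (p : F) (hp : IsProjOn (dualCone K) (pm + c • g z) p)
    (zhat : E) (hzhatH : zhat ∈ H)
    (hzhatmin : ∀ u ∈ H,
      lam * (⟪f' z + (g' z).adjoint p, zhat - z⟫ + h zhat) - ⟪r, zhat - z⟫
          + (Lψ / 2) * ‖zhat - z‖ ^ 2 ≤
        lam * (⟪f' z + (g' z).adjoint p, u - z⟫ + h u) - ⟪r, u - z⟫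
          + (Lψ / 2) * ‖u - z‖ ^ 2)
    (w : E) (hw : w = (1 / lam) • (r + Lψ • (z - zhat))) :
    -- conclusions: w ∈ ∇f(z) + ∂_δ h(z) + ∇g(z)p and the bounds on ‖w‖ and δ
    w - f' z - (g' z).adjoint p ∈ epsSubdiff H h δ z ∧
    ‖w‖ ≤ (1 / lam) * (1 + σ' * Real.sqrt Lψ) * ‖r‖ ∧
    δ ≤ σ' ^ 2 * ‖r‖ ^ 2 / (2 * lam) := by
  classical
  obtain ⟨x0, hx0⟩ := hHne
  have hBg0nn : 0 ≤ Bg0 := (norm_nonneg (g x0)).trans (hBg0 x0 hx0)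
  have hBg1nn : 0 ≤ Bg1 := (norm_nonneg (g' x0)).trans (hBg1 x0 hx0)
  have hLψpos : 0 < Lψ := by
    rw [hLψ]
    have h1 : 0 ≤ lam * Lf := mul_nonneg hlam.le hLf.le
    have h2 : 0 ≤ lam * (Lg * ‖pm‖) := by positivity
    have h3 : 0 ≤ lam * (c * (Bg0 * Lg + Bg1 ^ 2)) := by positivity
    nlinarith [h1, h2, h3]
  have hsqrtpos : 0 < Real.sqrt Lψ := Real.sqrt_pos.mpr hLψpos
  have hσ'nn : 0 ≤ σ' := by rw [hσ']; positivity
  -- cone facts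
  have hK0 : (0 : F) ∈ K := by
    obtain ⟨x, hx⟩ := hKne
    have ht : Filter.Tendsto (fun n : ℕ => (1 / (n + 1) : ℝ) • x) Filter.atTop (nhds 0) := by
      simpa using (tendsto_one_div_add_atTop_nhds_zero_nat (𝕜 := ℝ)).smul_const x
    exact hKcl.mem_of_tendsto ht
      (Filter.Eventually.of_forall fun n => hKcone _ (by positivity) x hx)
  have hKadd : ∀ a ∈ K, ∀ b ∈ K, a + b ∈ K := by
    intro a ha b hb
    have h2 : ((2:ℝ)) • ((1/2 : ℝ) • a + (1/2 : ℝ) • b) ∈ K :=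
      hKcone 2 (by norm_num) _ (hKcvx ha hb (by norm_num) (by norm_num) (by norm_num))
    convert h2 using 1
    module
  have hdK0 : (0 : F) ∈ dualCone K := by
    intro x hx
    simp
  have hdKcvx : Convex ℝ (dualCone K) := by
    intro y1 h1 y2 h2 a b ha hb hab
    intro x hx
    have e1 := h1 x hx
    have e2 := h2 x hx
    show (0:ℝ) ≤ ⟪a • y1 + b • y2, x⟫
    rw [inner_add_left, real_inner_smul_left, real_inner_smul_left]
    have := mul_nonneg ha e1
    have := mul_nonneg hb e2
    linarith
  -- projection onto -K
  have hSne : (-K).Nonempty := hKne.neg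
  have hScl : IsClosed (-K) := hKcl.neg
  have hex : ∀ y : F, ∃ m, m ∈ -K ∧ Metric.infDist y (-K) = dist y m := by
    intro y
    obtain ⟨m, hm1, hm2⟩ := hScl.exists_infDist_eq_dist hSne y
    exact ⟨m, hm1, hm2⟩
  choose π hπm hπd using hex
  have hπproj : ∀ y, IsProjOn (-K) y (π y) := by
    intro y
    refine ⟨hπm y, fun s hs => ?_⟩
    rw [← hπd y]
    exact Metric.infDist_le_dist_of_mem hs
  have hπobt : ∀ y, ∀ s ∈ -K, ⟪y - π y, s - π y⟫ ≤ 0 := fun y s hs =>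
    isProjOn_obtuse hKcvx.neg (hπproj y) hs
  have hπorth : ∀ y, ⟪y - π y, π y⟫ = 0 := by
    intro y
    have hmem2 : (2:ℝ) • π y ∈ -K := by
      rw [Set.mem_neg]
      rw [show -((2:ℝ) • π y) = (2:ℝ) • (-(π y)) from by module]
      exact hKcone 2 (by norm_num) _ (Set.mem_neg.mp (hπm y))
    have hmem0 : (0:F) ∈ -K := by rw [Set.mem_neg, neg_zero]; exact hK0
    have h1 := hπobt y _ hmem2
    have h2 := hπobt y _ hmem0
    rw [show (2:ℝ) • π y - π y = π y from by module] at h1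
    rw [show (0:F) - π y = -(π y) from by abel, inner_neg_right] at h2
    linarith
  have hPKmem : ∀ y, (y - π y) ∈ dualCone K := by
    intro y x hx
    have hs : π y - x ∈ -K := by
      rw [Set.mem_neg, show -(π y - x) = x + (-(π y)) from by abel]
      exact hKadd x hx _ (Set.mem_neg.mp (hπm y))
    have h1 := hπobt y _ hs
    rw [show (π y - x) - π y = -x from by abel, inner_neg_right] at h1
    show (0:ℝ) ≤ ⟪y - π y, x⟫
    linarith
  have hPKobt : ∀ y, ∀ s ∈ dualCone K, ⟪y - (y - π y), s - (y - π y)⟫ ≤ 0 := by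
    intro y s hs
    rw [show y - (y - π y) = π y from by abel, inner_sub_right]
    have h1 : ⟪π y, y - π y⟫ = 0 := by rw [real_inner_comm]; exact hπorth y
    have h2 : (0:ℝ) ≤ ⟪s, -(π y)⟫ := hs _ (Set.mem_neg.mp (hπm y))
    rw [inner_neg_right] at h2
    have h3 : ⟪π y, s⟫ = ⟪s, π y⟫ := real_inner_comm _ _
    linarith
  have hPKnorm : ∀ y, ‖y - π y‖ ≤ ‖y‖ := by
    intro y
    have hdecomp : ⟪y, y - π y⟫ = ‖y - π y‖ ^ 2 + ⟪π y, y - π y⟫ := by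
      rw [← real_inner_self_eq_norm_sq, ← inner_add_left]
      congr 1
      abel
    have horth : ⟪π y, y - π y⟫ = 0 := by rw [real_inner_comm]; exact hπorth y
    have hcs := real_inner_le_norm y (y - π y)
    nlinarith [norm_nonneg (y - π y), norm_nonneg y]
  have hPKlip : ∀ y y', ‖(y - π y) - (y' - π y')‖ ≤ ‖y - y'‖ := fun y y' =>
    obtuse_nonexpansive (hPKmem y) (hPKmem y') (hPKobt y) (hPKobt y')
  -- identify p with the Moreau projection
  have hpeq : p = (pm + c • g z) - π (pm + c • g z) :=
    obtuse_unique (S := dualCone K) (x := pm + c • g z)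
      (fun s hs => isProjOn_obtuse hdKcvx hp hs) (hPKobt _) hp.1 (hPKmem _)
  -- derivatives
  have hqD : ∀ y : F, HasFDerivAt (fun x => Metric.infDist x (-K) ^ 2)
      (InnerProductSpace.toDual ℝ F ((2:ℝ) • (y - π y))) y :=
    infDistSq_hasFDerivAt hπm hπd hπobt
  have hq0D : ∀ u : E, HasFDerivAt (fun x : E => ‖x - zm‖ ^ 2)
      (InnerProductSpace.toDual ℝ E ((2:ℝ) • (u - zm))) u := by
    have heq : (fun x : E => ‖x - zm‖ ^ 2) = fun x => Metric.infDist x {zm} ^ 2 := by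
      funext x
      rw [Metric.infDist_singleton, dist_eq_norm]
    rw [heq]
    exact infDistSq_hasFDerivAt (P := fun _ => zm) (fun y => rfl)
      (fun y => by rw [Metric.infDist_singleton])
      (fun y s hs => by rw [Set.mem_singleton_iff] at hs; simp [hs])
  set Gr : E → E := fun u =>
    lam • f' u + lam • ((g' u).adjoint ((pm + c • g u) - π (pm + c • g u))) + (u - zm)
    with hGrdef
  set Φ : E → ℝ := fun u =>
    lam * f u + lam / (2 * c) * Metric.infDist (pm + c • g u) (-K) ^ 2
      + 1 / 2 * ‖u - zm‖ ^ 2 with hΦdef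
  set d : E := zhat - z with hd_def
  have hΦD : ∀ u ∈ H, HasFDerivAt Φ (InnerProductSpace.toDual ℝ E (Gr u)) u := by
    intro u hu
    have hfD : HasFDerivAt f (InnerProductSpace.toDual ℝ E (f' u)) u :=
      (hfdiff u hu).hasFDerivAt
    have hYD : HasFDerivAt (fun x : E => pm + c • g x) (c • g' u) u :=
      ((hgdiff u).const_smul c).const_add pm
    have hqYD := (hqD (pm + c • g u)).comp u hYD
    have hsum := ((hfD.const_mul lam).add (hqYD.const_mul (lam / (2 * c)))).add
      ((hq0D u).const_mul (1 / 2))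
    have hCLM : (lam • InnerProductSpace.toDual ℝ E (f' u) +
        (lam / (2 * c)) • ((InnerProductSpace.toDual ℝ F
          ((2:ℝ) • ((pm + c • g u) - π (pm + c • g u)))).comp (c • g' u)) +
        (1 / 2 : ℝ) • InnerProductSpace.toDual ℝ E ((2:ℝ) • (u - zm)))
        = InnerProductSpace.toDual ℝ E (Gr u) := by
      apply ContinuousLinearMap.ext
      intro e
      simp only [ContinuousLinearMap.add_apply, ContinuousLinearMap.coe_smul',
        Pi.smul_apply, ContinuousLinearMap.coe_comp', Function.comp_apply,
        InnerProductSpace.toDual_apply_apply, ContinuousLinearMap.smul_apply, hGrdef,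
        smul_eq_mul]
      rw [inner_add_left, inner_add_left, real_inner_smul_left, real_inner_smul_left,
        real_inner_smul_left, real_inner_smul_left, real_inner_smul_right,
        ContinuousLinearMap.adjoint_inner_left]
      field_simp
    rw [← hCLM]
    exact hsum
  -- Lipschitz bound for Gr on H
  have hYnorm : ∀ u ∈ H, ‖(pm + c • g u) - π (pm + c • g u)‖ ≤ ‖pm‖ + c * Bg0 := by
    intro u hu
    refine (hPKnorm _).trans ?_
    refine (norm_add_le _ _).trans ?_
    rw [norm_smul, Real.norm_eq_abs, abs_of_pos hc]
    have hb := mul_le_mul_of_nonneg_left (hBg0 u hu) hc.le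
    linarith
  have hgLip : ∀ u ∈ H, ∀ x ∈ H, ‖g u - g x‖ ≤ Bg1 * ‖u - x‖ := by
    intro u hu x hx
    exact hHcvx.norm_image_sub_le_of_norm_hasFDerivWithin_le
      (fun w hw => (hgdiff w).hasFDerivWithinAt) (fun w hw => hBg1 w hw) hx hu
  have hGrLip : ∀ u ∈ H, ‖Gr u - Gr z‖ ≤ Lψ * ‖u - z‖ := by
    intro u hu
    have hsplit : Gr u - Gr z = lam • (f' u - f' z)
        + lam • ((g' u).adjoint ((pm + c • g u) - π (pm + c • g u))
          - (g' z).adjoint ((pm + c • g z) - π (pm + c • g z)))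
        + (u - z) := by
      simp only [hGrdef]
      module
    have h1 : ‖f' u - f' z‖ ≤ Lf * ‖u - z‖ := hflip z hz u hu
    have hA1 : (g' u).adjoint ((pm + c • g u) - π (pm + c • g u))
          - (g' z).adjoint ((pm + c • g z) - π (pm + c • g z))
        = (ContinuousLinearMap.adjoint (g' u - g' z)) ((pm + c • g u) - π (pm + c • g u))
          + (g' z).adjoint (((pm + c • g u) - π (pm + c • g u))
            - ((pm + c • g z) - π (pm + c • g z))) := by
      simp only [map_sub, ContinuousLinearMap.sub_apply]
      abel
    have hb1 : ‖(ContinuousLinearMap.adjoint (g' u - g' z))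
        ((pm + c • g u) - π (pm + c • g u))‖ ≤ (Lg * ‖u - z‖) * (‖pm‖ + c * Bg0) := by
      refine (ContinuousLinearMap.le_opNorm _ _).trans ?_
      rw [LinearIsometryEquiv.norm_map ContinuousLinearMap.adjoint]
      exact mul_le_mul (hglip z u) (hYnorm u hu) (norm_nonneg _) (by positivity)
    have hb2 : ‖(g' z).adjoint (((pm + c • g u) - π (pm + c • g u))
        - ((pm + c • g z) - π (pm + c • g z)))‖ ≤ Bg1 * (c * (Bg1 * ‖u - z‖)) := by
      refine (ContinuousLinearMap.le_opNorm _ _).trans ?_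
      rw [LinearIsometryEquiv.norm_map ContinuousLinearMap.adjoint]
      have hPP : ‖((pm + c • g u) - π (pm + c • g u))
          - ((pm + c • g z) - π (pm + c • g z))‖ ≤ c * (Bg1 * ‖u - z‖) := by
        refine (hPKlip _ _).trans ?_
        rw [show (pm + c • g u) - (pm + c • g z) = c • (g u - g z) from by module,
          norm_smul, Real.norm_eq_abs, abs_of_pos hc]
        exact mul_le_mul_of_nonneg_left (hgLip u hu z hz) hc.le
      exact mul_le_mul (hBg1 z hz) hPP (norm_nonneg _) hBg1nn
    have hAle : ‖(g' u).adjoint ((pm + c • g u) - π (pm + c • g u))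
          - (g' z).adjoint ((pm + c • g z) - π (pm + c • g z))‖
        ≤ (Lg * ‖pm‖ + c * (Bg0 * Lg + Bg1 ^ 2)) * ‖u - z‖ := by
      rw [hA1]
      refine (norm_add_le _ _).trans ?_
      linarith [hb1, hb2]
    have e1 : ‖lam • (f' u - f' z)‖ = lam * ‖f' u - f' z‖ := by
      rw [norm_smul, Real.norm_eq_abs, abs_of_pos hlam]
    have e2 : ‖lam • ((g' u).adjoint ((pm + c • g u) - π (pm + c • g u))
          - (g' z).adjoint ((pm + c • g z) - π (pm + c • g z)))‖
        = lam * ‖(g' u).adjoint ((pm + c • g u) - π (pm + c • g u))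
          - (g' z).adjoint ((pm + c • g z) - π (pm + c • g z))‖ := by
      rw [norm_smul, Real.norm_eq_abs, abs_of_pos hlam]
    have htri : ‖Gr u - Gr z‖ ≤ lam * ‖f' u - f' z‖
        + lam * ‖(g' u).adjoint ((pm + c • g u) - π (pm + c • g u))
          - (g' z).adjoint ((pm + c • g z) - π (pm + c • g z))‖ + ‖u - z‖ := by
      rw [hsplit]
      refine (norm_add_le _ _).trans ?_
      have := norm_add_le (lam • (f' u - f' z))
        (lam • ((g' u).adjoint ((pm + c • g u) - π (pm + c • g u))
          - (g' z).adjoint ((pm + c • g z) - π (pm + c • g z))))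
      rw [e1, e2] at this
      linarith
    rw [hLψ]
    linarith [htri, mul_le_mul_of_nonneg_left h1 hlam.le,
      mul_le_mul_of_nonneg_left hAle hlam.le]
  -- segment and descent lemma
  have hseg : ∀ t ∈ Set.Icc (0:ℝ) 1, z + t • d ∈ H := by
    intro t ht
    have hmem := hHcvx hz hzhatH (by linarith [ht.2] : (0:ℝ) ≤ 1 - t) ht.1 (by ring)
    convert hmem using 1
    rw [hd_def]
    module
  have hχD : ∀ t ∈ Set.Icc (0:ℝ) 1,
      HasDerivAt (fun s : ℝ => Φ (z + s • d)) ⟪Gr (z + t • d), d⟫ t := by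
    intro t ht
    have hline : HasDerivAt (fun s : ℝ => z + s • d) d t := by
      simpa using ((hasDerivAt_id t).smul_const d).const_add z
    have hcomp := (hΦD _ (hseg t ht)).comp_hasDerivAt t hline
    simpa [InnerProductSpace.toDual_apply_apply, Function.comp_def] using hcomp
  have hdesc : Φ zhat ≤ Φ z + ⟪Gr z, d⟫ + Lψ / 2 * ‖d‖ ^ 2 := by
    have hρD : ∀ t ∈ Set.Icc (0:ℝ) 1, HasDerivAt
        (fun t : ℝ => Φ z + ⟪Gr z, d⟫ * t + Lψ / 2 * ‖d‖ ^ 2 * t ^ 2 - Φ (z + t • d))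
        (⟪Gr z, d⟫ + Lψ / 2 * ‖d‖ ^ 2 * (2 * t) - ⟪Gr (z + t • d), d⟫) t := by
      intro t ht
      have ha : HasDerivAt (fun t : ℝ => ⟪Gr z, d⟫ * t) ⟪Gr z, d⟫ t := by
        simpa using (hasDerivAt_id t).const_mul ⟪Gr z, d⟫
      have hb : HasDerivAt (fun t : ℝ => Lψ / 2 * ‖d‖ ^ 2 * t ^ 2)
          (Lψ / 2 * ‖d‖ ^ 2 * (2 * t)) t := by
        have hb0 := (hasDerivAt_pow 2 t).const_mul (Lψ / 2 * ‖d‖ ^ 2)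
        exact hb0.congr_deriv (by norm_num)
      exact ((ha.const_add (Φ z)).add hb).sub (hχD t ht)
    have hmono := monotoneOn_of_deriv_nonneg (convex_Icc (0:ℝ) 1)
      (fun t ht => ((hρD t ht).continuousAt).continuousWithinAt)
      (fun t ht => by
        rw [interior_Icc] at ht
        exact ((hρD t ⟨ht.1.le, ht.2.le⟩).differentiableAt).differentiableWithinAt)
      (fun t ht => by
        rw [interior_Icc] at ht
        rw [(hρD t ⟨ht.1.le, ht.2.le⟩).deriv]
        have hlip := hGrLip _ (hseg t ⟨ht.1.le, ht.2.le⟩)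
        rw [show z + t • d - z = t • d from by abel, norm_smul, Real.norm_eq_abs,
          abs_of_pos ht.1] at hlip
        have hinner : ⟪Gr (z + t • d) - Gr z, d⟫ ≤ Lψ * (t * ‖d‖) * ‖d‖ := by
          refine (real_inner_le_norm _ _).trans ?_
          exact mul_le_mul_of_nonneg_right (by linarith [hlip] :
            ‖Gr (z + t • d) - Gr z‖ ≤ Lψ * (t * ‖d‖)) (norm_nonneg d)
        have hsub : ⟪Gr (z + t • d) - Gr z, d⟫ = ⟪Gr (z + t • d), d⟫ - ⟪Gr z, d⟫ :=
          inner_sub_left _ _ _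
        linarith [hinner, hsub])
    have h01 := hmono (Set.left_mem_Icc.mpr zero_le_one)
      (Set.right_mem_Icc.mpr zero_le_one) zero_le_one
    norm_num at h01
    rw [show z + d = zhat from by rw [hd_def]; abel] at h01
    linarith
  -- inequality (I) from the ε-subgradient
  have hAug : ∀ u : E, lam * AugLag K f h g c u pm + 1 / 2 * ‖u - zm‖ ^ 2
      = Φ u + lam * h u - lam * (1 / (2 * c)) * ‖pm‖ ^ 2 := by
    intro u
    simp only [hΦdef, AugLag]
    ring
  have hGrz : ⟪Gr z, d⟫ = lam * ⟪f' z, d⟫ + lam * ⟪(g' z).adjoint p, d⟫ + ⟪z - zm, d⟫ := by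
    simp only [hGrdef]
    rw [← hpeq, inner_add_left, inner_add_left, real_inner_smul_left, real_inner_smul_left]
  have hvd : ⟪v, d⟫ = ⟪r, d⟫ + ⟪z - zm, d⟫ := by
    rw [show v = r + (z - zm) from by rw [hr]; abel, inner_add_left]
  have hI : lam * h z - lam * h zhat
      ≤ lam * ⟪f' z, d⟫ + lam * ⟪(g' z).adjoint p, d⟫ - ⟪r, d⟫ + Lψ / 2 * ‖d‖ ^ 2 + ε := by
    have h1 := hv zhat hzhatH
    simp only at h1
    rw [hAug z, hAug zhat, ← hd_def] at h1
    linarith [hdesc, hGrz, hvd]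
  -- variational inequality (IV)
  have hIV : ∀ u ∈ H, 0 ≤ lam * ⟪f' z + (g' z).adjoint p, u - zhat⟫
      + lam * (h u - h zhat) - ⟪r, u - zhat⟫ + Lψ * ⟪d, u - zhat⟫ := by
    intro u hu
    have key : ∀ t : ℝ, 0 < t → t ≤ 1 →
        0 ≤ lam * ⟪f' z + (g' z).adjoint p, u - zhat⟫ + lam * (h u - h zhat)
          - ⟪r, u - zhat⟫ + Lψ * ⟪d, u - zhat⟫ + t * (Lψ / 2 * ‖u - zhat‖ ^ 2) := by
      intro t ht0 ht1
      have hmem : zhat + t • (u - zhat) ∈ H := by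
        have hmem0 := hHcvx hzhatH hu (by linarith : (0:ℝ) ≤ 1 - t) ht0.le (by ring)
        convert hmem0 using 1
        module
      have hmin := hzhatmin _ hmem
      have hpt : zhat + t • (u - zhat) - z = d + t • (u - zhat) := by
        rw [hd_def]; abel
      have hcvx : lam * h (zhat + t • (u - zhat))
          ≤ lam * ((1 - t) * h zhat + t * h u) := by
        refine mul_le_mul_of_nonneg_left ?_ hlam.le
        have h2 := hhcvx.2 hzhatH hu (by linarith : (0:ℝ) ≤ 1 - t) ht0.le (by ring)
        rw [show (1 - t) • zhat + t • u = zhat + t • (u - zhat) from by module] at h2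
        simpa using h2
      have e1 : ⟪f' z + (g' z).adjoint p, zhat + t • (u - zhat) - z⟫
          = ⟪f' z + (g' z).adjoint p, d⟫ + t * ⟪f' z + (g' z).adjoint p, u - zhat⟫ := by
        rw [hpt, inner_add_right, real_inner_smul_right]
      have e2 : ⟪r, zhat + t • (u - zhat) - z⟫ = ⟪r, d⟫ + t * ⟪r, u - zhat⟫ := by
        rw [hpt, inner_add_right, real_inner_smul_right]
      have e3 : ‖zhat + t • (u - zhat) - z‖ ^ 2
          = ‖d‖ ^ 2 + 2 * (t * ⟪d, u - zhat⟫) + t ^ 2 * ‖u - zhat‖ ^ 2 := by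
        rw [hpt, norm_add_sq_real, real_inner_smul_right, norm_smul, Real.norm_eq_abs,
          abs_of_pos ht0]
        ring
      rw [e1, e2, e3] at hmin
      have h0 : t * 0 ≤ t * (lam * ⟪f' z + (g' z).adjoint p, u - zhat⟫
          + lam * (h u - h zhat) - ⟪r, u - zhat⟫ + Lψ * ⟪d, u - zhat⟫
          + t * (Lψ / 2 * ‖u - zhat‖ ^ 2)) := by
        rw [mul_zero]
        linarith [hmin, hcvx]

      exact le_of_mul_le_mul_left h0 ht0
    have hle := helper_le (-(lam * ⟪f' z + (g' z).adjoint p, u - zhat⟫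
        + lam * (h u - h zhat) - ⟪r, u - zhat⟫ + Lψ * ⟪d, u - zhat⟫))
      (Lψ / 2 * ‖u - zhat‖ ^ 2) (fun t ht0 ht1 => by linarith [key t ht0 ht1])
    linarith
  -- (II) and (III)
  have hII := hIV z hz
  rw [show ((z : E) - zhat) = -d from by rw [hd_def]; abel] at hII
  rw [inner_neg_right, inner_neg_right, inner_neg_right, real_inner_self_eq_norm_sq] at hII
  have hGvd : ⟪f' z + (g' z).adjoint p, d⟫ = ⟪f' z, d⟫ + ⟪(g' z).adjoint p, d⟫ :=
    inner_add_left _ _ _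
  have hGvdl : lam * ⟪f' z + (g' z).adjoint p, d⟫
      = lam * ⟪f' z, d⟫ + lam * ⟪(g' z).adjoint p, d⟫ := by rw [hGvd]; ring
  have hIII : Lψ * ‖d‖ ^ 2 ≤ 2 * ε := by linarith [hI, hII, hGvdl]
  have h2ε : 2 * ε ≤ σ' ^ 2 * ‖r‖ ^ 2 := by
    rw [← hr] at hvineq
    linarith [sq_nonneg ‖v‖]
  refine ⟨?_, ?_, ?_⟩
  · -- the δ-subгradient inclusion
    intro z' hz'
    have hIVz' := hIV z' hz'
    have hsplitGv : ⟪f' z + (g' z).adjoint p, z' - z⟫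
        = ⟪f' z + (g' z).adjoint p, z' - zhat⟫ + ⟪f' z + (g' z).adjoint p, d⟫ := by
      rw [← inner_add_right]
      congr 1
      rw [hd_def]; abel
    have hsplitr : ⟪r, z' - z⟫ = ⟪r, z' - zhat⟫ + ⟪r, d⟫ := by
      rw [← inner_add_right]; congr 1; rw [hd_def]; abel
    have hsplitd : ⟪d, z' - z⟫ = ⟪d, z' - zhat⟫ + ‖d‖ ^ 2 := by
      rw [← real_inner_self_eq_norm_sq, ← inner_add_right]; congr 1; rw [hd_def]; abel
    have hs : lam * h z + (⟪r, z' - z⟫ - Lψ * ⟪d, z' - z⟫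
        - lam * ⟪f' z + (g' z).adjoint p, z' - z⟫) - ε ≤ lam * h z' := by
      have hsGv : lam * ⟪f' z + (g' z).adjoint p, z' - z⟫
          = lam * ⟪f' z + (g' z).adjoint p, z' - zhat⟫
            + lam * ⟪f' z + (g' z).adjoint p, d⟫ := by rw [hsplitGv]; ring
      have hsd : Lψ * ⟪d, z' - z⟫ = Lψ * ⟪d, z' - zhat⟫ + Lψ * ‖d‖ ^ 2 := by
        rw [hsplitd]; ring
      linarith [hIVz', hI, hsGv, hsplitr, hsd, hGvdl,
        mul_nonneg hLψpos.le (sq_nonneg ‖d‖)]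
    have hwv : w - f' z - (g' z).adjoint p
        = (1 / lam) • (r + Lψ • (z - zhat) - lam • (f' z + (g' z).adjoint p)) := by
      have hlaminv : (1 / lam) • (lam • (f' z + (g' z).adjoint p))
          = f' z + (g' z).adjoint p := by
        rw [smul_smul, one_div_mul_cancel hlam.ne', one_smul]
      rw [hw, smul_sub (1 / lam) (r + Lψ • (z - zhat)) (lam • (f' z + (g' z).adjoint p)),
        hlaminv]
      abel
    have hinner : ⟪w - f' z - (g' z).adjoint p, z' - z⟫
        = (1 / lam) * (⟪r, z' - z⟫ - Lψ * ⟪d, z' - z⟫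
          - lam * ⟪f' z + (g' z).adjoint p, z' - z⟫) := by
      rw [hwv, real_inner_smul_left]
      congr 1
      rw [inner_sub_left, inner_add_left, real_inner_smul_left, real_inner_smul_left,
        show ⟪z - zhat, z' - z⟫ = -⟪d, z' - z⟫ from by
          rw [show (z : E) - zhat = -d from by rw [hd_def]; abel, inner_neg_left]]
      ring
    rw [hinner, hδ]
    have hmul := mul_le_mul_of_nonneg_left hs (by positivity : (0:ℝ) ≤ 1 / lam)
    have e1 : 1 / lam * (lam * h z + (⟪r, z' - z⟫ - Lψ * ⟪d, z' - z⟫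
        - lam * ⟪f' z + (g' z).adjoint p, z' - z⟫) - ε)
        = h z + 1 / lam * (⟪r, z' - z⟫ - Lψ * ⟪d, z' - z⟫
          - lam * ⟪f' z + (g' z).adjoint p, z' - z⟫) - ε / lam := by
      field_simp
    have e2 : 1 / lam * (lam * h z') = h z' := by field_simp
    rw [e1, e2] at hmul
    exact hmul
  · -- the norm bound on w
    have hd1 : Lψ * ‖d‖ ≤ Real.sqrt Lψ * (σ' * ‖r‖) := by
      have ha : (Real.sqrt Lψ * ‖d‖) ^ 2 ≤ (σ' * ‖r‖) ^ 2 := by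
        rw [mul_pow, mul_pow, Real.sq_sqrt hLψpos.le]
        linarith [hIII, h2ε]
      have hb : Real.sqrt Lψ * ‖d‖ ≤ σ' * ‖r‖ := by
        nlinarith [mul_nonneg hsqrtpos.le (norm_nonneg d), mul_nonneg hσ'nn (norm_nonneg r)]
      calc Lψ * ‖d‖ = Real.sqrt Lψ * (Real.sqrt Lψ * ‖d‖) := by
            rw [← mul_assoc, Real.mul_self_sqrt hLψpos.le]
        _ ≤ Real.sqrt Lψ * (σ' * ‖r‖) := mul_le_mul_of_nonneg_left hb hsqrtpos.le
    have hnw : ‖r + Lψ • (z - zhat)‖ ≤ ‖r‖ + Lψ * ‖d‖ := by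
      refine (norm_add_le _ _).trans ?_
      rw [norm_smul, Real.norm_eq_abs, abs_of_pos hLψpos,
        show ‖z - zhat‖ = ‖d‖ from by rw [hd_def, norm_sub_rev]]
    rw [hw, norm_smul, Real.norm_eq_abs, abs_of_pos (by positivity : (0:ℝ) < 1/lam)]
    have hfin : ‖r + Lψ • (z - zhat)‖ ≤ (1 + σ' * Real.sqrt Lψ) * ‖r‖ := by
      linarith [hnw, hd1]
    linarith [mul_le_mul_of_nonneg_left hfin (by positivity : (0:ℝ) ≤ 1/lam)]

  · -- the bound on δ
    rw [hδ, div_le_div_iff₀ hlam (by linarith : (0:ℝ) < 2 * lam)]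
    linarith [mul_le_mul_of_nonneg_right h2ε hlam.le]
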